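/- Let c_0, c_w ∈ K be nonzero elements of a field K of characteristic p > 0, and work in S = K[x,y,z,w]. The ideal I = ⟨c_0 x + c_w y^{p-1}z, c_0 y^{p-1}z + c_w y^{p-2}z^2, ..., c_0 y^2z^{p-2} + c_w yz^{p-1}, c_0 yz^{p-1} + c_w wx, x^2, xy^{p-1}z, ..., xyz^{p-1}, y^p z, y^{p-1}z^2, ..., y^2 z^{p-1}, yz^p⟩ does not contain the element x. -/

import Mathlib

open MvPolynomial

/-- For `F_*S` free over `S = K[x_1,…,x_n]` with basis `{F_*(x^α) : α ∈ {0,…,p-1}^n}`,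
`frobCoeff p α f` is the coefficient `s_α ∈ S` in the expansion
`F_*f = Σ_α s_α • F_*(x^α)`, i.e. `f = Σ_α s_α^p x^α`. -/
noncomputable def frobCoeff {K : Type*} [Field K] (p : ℕ) [Fact p.Prime] [ExpChar K p]
    [PerfectRing K p] {n : ℕ} (α : Fin n → ℕ) (f : MvPolynomial (Fin n) K) :
    MvPolynomial (Fin n) K :=
  ∑ d ∈ f.support,
    if ∀ i, d i % p = α i then
      monomial (Finsupp.mapRange (· / p) (Nat.zero_div p) d)
        ((frobeniusEquiv K p).symm (f.coeff d))
    else 0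

/-- The generating trace map `Φ : F_*S → S`, the `S`-linear projection onto the
coefficient of `F_*(x_1^(p-1) ⋯ x_n^(p-1))`. -/
noncomputable def phi {K : Type*} [Field K] (p : ℕ) [Fact p.Prime] [ExpChar K p]
    [PerfectRing K p] {n : ℕ} (f : MvPolynomial (Fin n) K) : MvPolynomial (Fin n) K :=
  frobCoeff p (fun _ => p - 1) f

/-- The ideal `Φ(F_*(f•S)) = {Φ(F_*(f•h)) : h ∈ S}`, which computes the test ideal
`τ(S, f^(1/p))`. -/
noncomputable def tauP {K : Type*} [Field K] (p : ℕ) [Fact p.Prime] [ExpChar K p]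
    [PerfectRing K p] {n : ℕ} (f : MvPolynomial (Fin n) K) : Ideal (MvPolynomial (Fin n) K) :=
  Ideal.span {g | ∃ h, g = phi p (f * h)}

/-- The explicit generating set
`{c₀x + c_w y^(p-1)z} ∪ {c₀ y^(p-i)z^i + c_w y^(p-i-1)z^(i+1) : 1 ≤ i ≤ p-2} ∪
{c₀ yz^(p-1) + c_w wx, x²} ∪ {x y^(p-i)z^i : 1 ≤ i ≤ p-1} ∪
{y^(p+1-i) z^i : 1 ≤ i ≤ p}` (the last family being `y^p z, …, y² z^(p-1), y z^p`),
in `S = K[x,y,z,w]` with `x = X 0`, `y = X 1`, `z = X 2`, `w = X 3`. -/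
def gens6 {K : Type*} [Field K] (p : ℕ) (c0 cw : K) : Set (MvPolynomial (Fin 4) K) :=
  {C c0 * X 0 + C cw * X 1 ^ (p - 1) * X 2,
      C c0 * X 1 * X 2 ^ (p - 1) + C cw * X 3 * X 0, X 0 ^ 2} ∪
    {g | ∃ i, 1 ≤ i ∧ i ≤ p - 2 ∧
      g = C c0 * X 1 ^ (p - i) * X 2 ^ i + C cw * X 1 ^ (p - i - 1) * X 2 ^ (i + 1)} ∪
    {g | ∃ i, 1 ≤ i ∧ i ≤ p - 1 ∧ g = X 0 * X 1 ^ (p - i) * X 2 ^ i} ∪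
    {g | ∃ i, 1 ≤ i ∧ i ≤ p ∧ g = X 1 ^ (p + 1 - i) * X 2 ^ i}

lemma chainAux15 {K : Type*} [Field K] (c0 cw b : K) (hcb : c0 + cw * b = 0)
    (s t : ℕ) (hs : 1 ≤ s) :
    Polynomial.C c0 * (Polynomial.X ^ s * (Polynomial.C b * Polynomial.X) ^ t) +
      Polynomial.C cw * (Polynomial.X ^ (s-1) * (Polynomial.C b * Polynomial.X) ^ (t+1))
      = (0 : Polynomial K) := by
  obtain ⟨m, rfl⟩ : ∃ m, s = m + 1 := ⟨s - 1, by omega⟩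
  simp only [Nat.add_sub_cancel]
  have h : Polynomial.C c0 * (Polynomial.X ^ (m+1) * (Polynomial.C b * Polynomial.X) ^ t) +
      Polynomial.C cw * (Polynomial.X ^ m * (Polynomial.C b * Polynomial.X) ^ (t+1))
      = (Polynomial.C c0 + Polynomial.C cw * Polynomial.C b) * Polynomial.C b ^ t *
        Polynomial.X ^ (m + 1 + t) := by ring
  rw [h, ← Polynomial.C_mul, ← Polynomial.C_add, hcb]
  simp

lemma lastAux15 {K : Type*} [Field K] (c0 cw b w0 : K) (m : ℕ)
    (h : c0 * b ^ m + cw * w0 = 0) :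
    Polynomial.C c0 * Polynomial.X * (Polynomial.C b * Polynomial.X) ^ m +
      Polynomial.C cw * Polynomial.C w0 * Polynomial.X ^ (m+1) = (0 : Polynomial K) := by
  have h2 : Polynomial.C c0 * Polynomial.X * (Polynomial.C b * Polynomial.X) ^ m +
      Polynomial.C cw * Polynomial.C w0 * Polynomial.X ^ (m+1)
      = Polynomial.C (c0 * b ^ m + cw * w0) * Polynomial.X ^ (m+1) := by
    rw [Polynomial.C_add, Polynomial.C_mul, Polynomial.C_mul, Polynomial.C_pow]; ring
  rw [h2, h]; simp

lemma monAux15 {K : Type*} [Field K] (p : ℕ) (c : K) (e : ℕ) (he : p + 1 ≤ e) :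
    Polynomial.C c * Polynomial.X ^ e ∈
      Ideal.span {(Polynomial.X : Polynomial K) ^ (p+1)} := by
  rw [Ideal.mem_span_singleton]
  exact (pow_dvd_pow _ he).mul_left _


/-- for nonzero `c₀, c_w` in a field of characteristic `p > 0`, the ideal of
`K[x,y,z,w]` generated by the binomial chain
`c₀x + c_w y^(p-1)z, c₀y^(p-1)z + c_w y^(p-2)z², …, c₀y²z^(p-2) + c_w yz^(p-1),
c₀yz^(p-1) + c_w wx` together with the monomials
`x², xy^(p-1)z, …, xyz^(p-1), y^p z, y^(p-1)z², …, y²z^(p-1), yz^p` does not contain `x`. -/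
theorem statement15 {K : Type*} [Field K] (p : ℕ) [Fact p.Prime] [CharP K p]
    (c0 cw : K) (h0 : c0 ≠ 0) (hw : cw ≠ 0) :
    (X 0 : MvPolynomial (Fin 4) K) ∉ Ideal.span (gens6 p c0 cw) := by
  intro hmem
  have hp2 : 2 ≤ p := (Fact.out : p.Prime).two_le
  set b : K := -c0 / cw with hb
  have hcb : c0 + cw * b = 0 := by rw [hb]; field_simp; ring
  set w0 : K := -(c0 * b ^ (p-1)) / cw with hw0
  have hcw0 : c0 * b ^ (p-1) + cw * w0 = 0 := by rw [hw0]; field_simp; ring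
  set v : Fin 4 → Polynomial K :=
    ![Polynomial.X ^ p, Polynomial.X, Polynomial.C b * Polynomial.X, Polynomial.C w0] with hv
  set J : Ideal (Polynomial K) := Ideal.span {Polynomial.X ^ (p+1)} with hJ
  have key : ∀ g ∈ gens6 p c0 cw, (aeval v g : Polynomial K) ∈ J := by
    intro g hg
    simp only [gens6, Set.mem_union, Set.mem_insert_iff, Set.mem_singleton_iff,
      Set.mem_setOf_eq] at hg
    rcases hg with (((rfl | rfl | rfl) | ⟨i, hi1, hi2, rfl⟩) | ⟨i, hi1, hi2, rfl⟩) |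
      ⟨i, hi1, hi2, rfl⟩
    · -- c0 x + cw y^(p-1) z
      have h : (aeval v (C c0 * X 0 + C cw * X 1 ^ (p - 1) * X 2) : Polynomial K) = 0 := by
        simp only [map_add, map_mul, map_pow, aeval_X, aeval_C, Polynomial.algebraMap_eq, hv,
          Matrix.cons_val_zero, Matrix.cons_val_one, Matrix.head_cons,
          Matrix.cons_val_two, Matrix.tail_cons]
        linear_combination chainAux15 c0 cw b hcb p 0 (by omega)
      rw [h]; exact zero_mem _
    · -- c0 y z^(p-1) + cw w x
      have h : (aeval v (C c0 * X 1 * X 2 ^ (p - 1) + C cw * X 3 * X 0) : Polynomial K) = 0 := by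
        simp only [map_add, map_mul, map_pow, aeval_X, aeval_C, Polynomial.algebraMap_eq, hv,
          Matrix.cons_val_zero, Matrix.cons_val_one, Matrix.head_cons,
          Matrix.cons_val_two, Matrix.tail_cons, Matrix.cons_val_three]
        have h2 := lastAux15 c0 cw b w0 (p-1) hcw0
        rw [show p - 1 + 1 = p by omega] at h2
        linear_combination h2
      rw [h]; exact zero_mem _
    · -- x^2
      have h : (aeval v (X 0 ^ 2 : MvPolynomial (Fin 4) K) : Polynomial K)
          = Polynomial.C 1 * Polynomial.X ^ (p + p) := by
        simp only [map_pow, aeval_X, hv, Matrix.cons_val_zero]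
        rw [Polynomial.C_1, one_mul, ← pow_mul, mul_two]
      rw [h]; exact monAux15 p 1 (p+p) (by omega)
    · -- chain binomials
      have h : (aeval v (C c0 * X 1 ^ (p - i) * X 2 ^ i +
          C cw * X 1 ^ (p - i - 1) * X 2 ^ (i + 1)) : Polynomial K) = 0 := by
        simp only [map_add, map_mul, map_pow, aeval_X, aeval_C, Polynomial.algebraMap_eq, hv,
          Matrix.cons_val_one, Matrix.head_cons, Matrix.cons_val_two, Matrix.tail_cons,
          Matrix.cons_val_zero]
        linear_combination chainAux15 c0 cw b hcb (p - i) i (by omega)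
      rw [h]; exact zero_mem _
    · -- x y^(p-i) z^i
      have h : (aeval v (X 0 * X 1 ^ (p - i) * X 2 ^ i : MvPolynomial (Fin 4) K) : Polynomial K)
          = Polynomial.C (b ^ i) * Polynomial.X ^ (p + (p - i) + i) := by
        simp only [map_mul, map_pow, aeval_X, hv, Matrix.cons_val_zero, Matrix.cons_val_one,
          Matrix.head_cons, Matrix.cons_val_two, Matrix.tail_cons]
        ring
      rw [h]; exact monAux15 p _ _ (by omega)
    · -- y^(p+1-i) z^i
      have h : (aeval v (X 1 ^ (p + 1 - i) * X 2 ^ i : MvPolynomial (Fin 4) K) : Polynomial K)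
          = Polynomial.C (b ^ i) * Polynomial.X ^ ((p + 1 - i) + i) := by
        simp only [map_mul, map_pow, aeval_X, hv, Matrix.cons_val_one, Matrix.head_cons,
          Matrix.cons_val_two, Matrix.tail_cons, Matrix.cons_val_zero]
        ring
      rw [h]; exact monAux15 p _ _ (by omega)
  set ψ : MvPolynomial (Fin 4) K →+* Polynomial K ⧸ J :=
    (Ideal.Quotient.mk J).comp (aeval v : MvPolynomial (Fin 4) K →ₐ[K] Polynomial K).toRingHom
    with hψ
  have hker : Ideal.span (gens6 p c0 cw) ≤ RingHom.ker ψ := by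
    rw [Ideal.span_le]
    intro g hg
    simp only [SetLike.mem_coe, RingHom.mem_ker, hψ, RingHom.comp_apply]
    exact Ideal.Quotient.eq_zero_iff_mem.mpr (key g hg)
  have hx0 : ψ (X 0) = 0 := hker hmem
  have hXp : (Polynomial.X : Polynomial K) ^ p ∈ J := by
    have heval : (aeval v (X 0 : MvPolynomial (Fin 4) K) : Polynomial K) = Polynomial.X ^ p := by
      simp [hv]
    rw [← Ideal.Quotient.eq_zero_iff_mem, ← heval]
    exact hx0
  rw [hJ, Ideal.mem_span_singleton] at hXp
  have hc := Polynomial.X_pow_dvd_iff.mp hXp p (by omega)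
  rw [Polynomial.coeff_X_pow] at hc
  simp at hc
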